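/- arXiv:1706.04066 — 3 statements merged into one kernel-verified Lean document; each statement's English description precedes it below -/
import Mathlib

section
/- Let Y > 0, M ∈ ℕ with M ≥ 1, and μ ∈ (0,1]. Define the graded mesh points y_m = (m/M)^{1/μ} Y for m = 0,1,…,M and the element lengths h_m = y_m − y_{m−1}. Then h_1 = M^{−1/μ} Y, and for every m with 2 ≤ m ≤ M it holds (2^{(μ−1)/μ}/μ) · y_m^{1−μ} Y^{μ} M^{−1} ≤ h_m ≤ (1/μ) · y_m^{1−μ} Y^{μ} M^{−1}. -/
lemma mvt_rpow_bounds (a : ℝ) (ha : 1 ≤ a) (x : ℝ) (hx : 2 ≤ x) :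
    a * (x/2) ^ (a-1) ≤ x ^ a - (x-1) ^ a ∧ x ^ a - (x-1) ^ a ≤ a * x ^ (a-1) := by
  have hx1 : (1:ℝ) ≤ x - 1 := by linarith
  obtain ⟨ξ, hξ, hslope⟩ := exists_hasDerivAt_eq_slope (fun t => t ^ a)
      (fun t => a * t ^ (a-1)) (by linarith : x - 1 < x)
      (fun t ht => (Real.continuousAt_rpow_const t a
        (Or.inl (by nlinarith [ht.1]))).continuousWithinAt)
      (fun t ht => Real.hasDerivAt_rpow_const
        (Or.inl (by nlinarith [ht.1])))
  have hsub : x - (x-1) = 1 := by ring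
  rw [hsub, div_one] at hslope
  have ha0 : 0 ≤ a := by linarith
  have ha1 : 0 ≤ a - 1 := by linarith
  constructor
  · rw [← hslope]
    have : (x/2) ^ (a-1) ≤ ξ ^ (a-1) :=
      Real.rpow_le_rpow (by linarith) (by have := hξ.1; linarith) ha1
    exact mul_le_mul_of_nonneg_left this ha0
  · rw [← hslope]
    have : ξ ^ (a-1) ≤ x ^ (a-1) :=
      Real.rpow_le_rpow (by have := hξ.1; linarith) (le_of_lt hξ.2) ha1
    exact mul_le_mul_of_nonneg_left this ha0

/-- Graded mesh element lengths. -/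
theorem graded_mesh_element_lengths
    (Y : ℝ) (hY : 0 < Y) (M : ℕ) (hM : 1 ≤ M) (μ : ℝ) (hμ : μ ∈ Set.Ioc (0:ℝ) 1)
    (y h : ℕ → ℝ)
    (hy : ∀ m, m ≤ M → y m = ((m : ℝ) / (M : ℝ)) ^ (1/μ) * Y)
    (hh : ∀ m, 1 ≤ m → m ≤ M → h m = y m - y (m - 1)) :
    h 1 = (M : ℝ) ^ (-(1/μ)) * Y ∧
    ∀ m, 2 ≤ m → m ≤ M →
      (2 : ℝ) ^ ((μ - 1)/μ) / μ * (y m) ^ (1 - μ) * Y ^ μ * (M : ℝ)⁻¹ ≤ h m ∧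
      h m ≤ 1/μ * (y m) ^ (1 - μ) * Y ^ μ * (M : ℝ)⁻¹ := by
  obtain ⟨hμ0, hμ1⟩ := hμ
  set a : ℝ := 1/μ with ha_def
  have ha1 : 1 ≤ a := by rw [ha_def, le_div_iff₀ hμ0]; linarith
  have hM0 : (0:ℝ) < (M:ℝ) := by exact_mod_cast hM
  constructor
  · rw [hh 1 le_rfl hM, hy 1 hM, hy 0 (by omega)]
    simp only [Nat.cast_one, Nat.cast_zero]
    rw [zero_div, Real.zero_rpow (by positivity : (1:ℝ)/μ ≠ 0),
      one_div (M:ℝ), Real.inv_rpow hM0.le, ← Real.rpow_neg hM0.le]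
    ring
  · intro m hm2 hmM
    have hm1 : 1 ≤ m := by omega
    have hmr : (2:ℝ) ≤ (m:ℝ) := by exact_mod_cast hm2
    have hcast : ((m - 1 : ℕ) : ℝ) = (m:ℝ) - 1 := by
      rw [Nat.cast_sub hm1]; norm_num
    have hhm : h m = ((m:ℝ)^a - ((m:ℝ)-1)^a) / (M:ℝ)^a * Y := by
      rw [hh m hm1 hmM, hy m hmM, hy (m-1) (by omega), hcast,
        Real.div_rpow (by positivity) hM0.le, Real.div_rpow (by linarith) hM0.le]
      ring
    have hY' : Y^(1-μ) * Y^μ = Y := by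
      rw [← Real.rpow_add hY]; norm_num
    have hMsplit : (M:ℝ)^a = (M:ℝ)^(a-1) * (M:ℝ) := by
      rw [← Real.rpow_add_one (ne_of_gt hM0)]; ring_nf
    have hkey : (y m)^(1-μ) * Y^μ * (M:ℝ)⁻¹ = (m:ℝ)^(a-1) / (M:ℝ)^a * Y := by
      rw [hy m hmM, Real.mul_rpow (by positivity) hY.le,
        ← Real.rpow_mul (by positivity)]
      have haμ : a * (1-μ) = a - 1 := by rw [ha_def]; field_simp
      rw [haμ, Real.div_rpow (by positivity) hM0.le, hMsplit]
      calc (m:ℝ)^(a-1)/((M:ℝ)^(a-1)) * Y^(1-μ) * Y^μ * (M:ℝ)⁻¹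
          = (m:ℝ)^(a-1)/((M:ℝ)^(a-1)*(M:ℝ)) * (Y^(1-μ)*Y^μ) := by ring
        _ = (m:ℝ)^(a-1)/((M:ℝ)^(a-1)*(M:ℝ)) * Y := by rw [hY']
    have he : (μ-1)/μ = -(a-1) := by rw [ha_def]; field_simp; ring
    have h2 : ((m:ℝ)/2)^(a-1) = (2:ℝ)^((μ-1)/μ) * (m:ℝ)^(a-1) := by
      rw [Real.div_rpow (by linarith) (by norm_num), he, Real.rpow_neg (by norm_num)]
      ring
    obtain ⟨hlow, hup⟩ := mvt_rpow_bounds a ha1 (m:ℝ) hmr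
    have hMa : (0:ℝ) < (M:ℝ)^a := Real.rpow_pos_of_pos hM0 a
    constructor
    · rw [hhm]
      calc (2:ℝ)^((μ-1)/μ)/μ * (y m)^(1-μ) * Y^μ * (M:ℝ)⁻¹
          = (2:ℝ)^((μ-1)/μ)/μ * ((y m)^(1-μ) * Y^μ * (M:ℝ)⁻¹) := by ring
        _ = a * ((m:ℝ)/2)^(a-1) / (M:ℝ)^a * Y := by
            rw [hkey, h2, ha_def]; ring
        _ ≤ ((m:ℝ)^a - ((m:ℝ)-1)^a) / (M:ℝ)^a * Y := by gcongr
    · rw [hhm]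
      calc ((m:ℝ)^a - ((m:ℝ)-1)^a) / (M:ℝ)^a * Y
          ≤ a * (m:ℝ)^(a-1) / (M:ℝ)^a * Y := by gcongr
        _ = 1/μ * ((y m)^(1-μ) * Y^μ * (M:ℝ)⁻¹) := by rw [hkey, ha_def]; ring
        _ = 1/μ * (y m)^(1-μ) * Y^μ * (M:ℝ)⁻¹ := by ring
end

section
/- Let s ∈ (0,1). For every n ∈ ℕ₀ and every z > 0, the n-th derivative of the function z ↦ z^{s} K_{s}(z) satisfies (d/dz)^n (z^{s} K_{s}(z)) = Σ_{m=0}^{n} a_m^n z^{s−m} K_{s−(n−m)}(z), where a_0^n = (−1)^n, a_m^n = (−1)^{n+m} 2^{−m} n!/(m!(n−2m)!) for 1 ≤ m ≤ ⌊n/2⌋, and a_m^n = 0 for ⌊n/2⌋ < m ≤ n. -/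
open Real MeasureTheory Set Filter

/-- The modified Bessel function of the second kind,
`K_ν(z) = ∫₀^∞ exp(−z cosh t) cosh(ν t) dt`. -/
noncomputable def besselK (ν z : ℝ) : ℝ :=
  ∫ t in Set.Ioi (0:ℝ), Real.exp (-z * Real.cosh t) * Real.cosh (ν * t)

/-- The coefficients `a_m^n` appearing in the formula for the `n`-th derivative of
`z^s K_s(z)`. -/
noncomputable def coefA (n m : ℕ) : ℝ :=
  if m = 0 then (-1 : ℝ) ^ n
  else if m ≤ n / 2 then
    (-1 : ℝ) ^ (n + m) * (1 / 2 ^ m) * (n.factorial : ℝ) /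
      ((m.factorial : ℝ) * ((n - 2 * m).factorial : ℝ))
  else 0


lemma sq_div_le_cosh (t : ℝ) (ht : 0 ≤ t) : t^2/8 ≤ Real.cosh t := by
  have h1 : t/2 + 1 ≤ Real.exp (t/2) := Real.add_one_le_exp _
  have h2 : (t/2 + 1)^2 ≤ Real.exp (t/2) * Real.exp (t/2) := by
    have : 0 ≤ t/2 + 1 := by linarith
    nlinarith
  rw [← Real.exp_add] at h2
  have he : t/2 + t/2 = t := by ring
  rw [he] at h2
  have h3 : t^2/4 ≤ Real.exp t := by nlinarith
  have h4 := Real.cosh_eq t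
  have h5 : 0 < Real.exp (-t) := Real.exp_pos _
  nlinarith
lemma master_integrable (z c : ℝ) (hz : 0 < z) :
    IntegrableOn (fun t => Real.exp (-z * Real.cosh t + c * t)) (Set.Ioi (0:ℝ)) := by
  have hb : (0:ℝ) < z/8 := by linarith
  have hg : Integrable (fun t : ℝ =>
      Real.exp (2*c^2/z) * Real.exp (-(z/8) * (t - 4*c/z)^2)) :=
    ((integrable_exp_neg_mul_sq hb).comp_sub_right (4*c/z)).const_mul _
  refine (hg.integrableOn).mono' ?_ ?_
  · exact (Continuous.aestronglyMeasurable (by fun_prop))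
  · rw [ae_restrict_iff' measurableSet_Ioi]
    refine ae_of_all _ (fun t ht => ?_)
    have ht' : (0:ℝ) ≤ t := le_of_lt ht
    have hcosh := sq_div_le_cosh t ht'
    rw [Real.norm_eq_abs, Real.abs_exp, ← Real.exp_add]
    apply Real.exp_le_exp.2
    have key : 2*c^2/z + (-(z/8) * (t - 4*c/z)^2) = -(z/8)*t^2 + c*t := by
      field_simp
      ring
    rw [key]
    nlinarith

lemma cosh_le_exp_abs (x : ℝ) : Real.cosh x ≤ Real.exp |x| := by
  rw [← Real.cosh_abs, Real.cosh_eq]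
  have h1 : Real.exp (-|x|) ≤ Real.exp |x| := Real.exp_le_exp.2 (by linarith [abs_nonneg x])
  linarith

lemma abs_sinh_le_exp_abs (x : ℝ) : |Real.sinh x| ≤ Real.exp |x| := by
  rw [Real.abs_sinh, Real.sinh_eq]
  linarith [Real.exp_pos (-|x|), Real.exp_pos |x|]

lemma integrableOn_of_bound {z : ℝ} (hz : 0 < z) (f : ℝ → ℝ) (C c : ℝ)
    (hm : AEStronglyMeasurable f (volume.restrict (Set.Ioi (0:ℝ))))
    (hf : ∀ t ∈ Set.Ioi (0:ℝ), |f t| ≤ C * Real.exp (-z*Real.cosh t + c*t)) :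
    IntegrableOn f (Set.Ioi (0:ℝ)) := by
  refine ((master_integrable z c hz).const_mul C).mono' hm ?_
  rw [ae_restrict_iff' measurableSet_Ioi]
  exact ae_of_all _ (fun t ht => (Real.norm_eq_abs _ ▸ hf t ht))

lemma integrableOn_besselK_integrand (ν : ℝ) {z : ℝ} (hz : 0 < z) :
    IntegrableOn (fun t => Real.exp (-z * Real.cosh t) * Real.cosh (ν * t))
      (Set.Ioi (0:ℝ)) := by
  refine integrableOn_of_bound hz _ 1 |ν| (Continuous.aestronglyMeasurable (by fun_prop)) ?_
  intro t ht
  have ht' : (0:ℝ) ≤ t := le_of_lt ht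
  have h1 : Real.cosh (ν * t) ≤ Real.exp (|ν| * t) := by
    have := cosh_le_exp_abs (ν * t)
    rwa [abs_mul, abs_of_nonneg ht'] at this
  have h2 : 0 < Real.exp (-z * Real.cosh t) := Real.exp_pos _
  have h3 : 0 < Real.cosh (ν * t) := Real.cosh_pos (x:=ν*t)
  rw [abs_of_nonneg (by positivity), one_mul, Real.exp_add]
  exact mul_le_mul_of_nonneg_left h1 h2.le

lemma integrableOn_sinh_integrand (ν : ℝ) {z : ℝ} (hz : 0 < z) :
    IntegrableOn (fun t => Real.sinh t * (Real.exp (-z * Real.cosh t) * Real.sinh (ν * t)))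
      (Set.Ioi (0:ℝ)) := by
  refine integrableOn_of_bound hz _ 1 (1 + |ν|) (Continuous.aestronglyMeasurable (by fun_prop)) ?_
  intro t ht
  have ht' : (0:ℝ) ≤ t := le_of_lt ht
  have h1 : |Real.sinh (ν * t)| ≤ Real.exp (|ν| * t) := by
    have := abs_sinh_le_exp_abs (ν * t)
    rwa [abs_mul, abs_of_nonneg ht'] at this
  have h2 : |Real.sinh t| ≤ Real.exp t := by
    have := abs_sinh_le_exp_abs t
    rwa [abs_of_nonneg ht'] at this
  have h3 : 0 < Real.exp (-z * Real.cosh t) := Real.exp_pos _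
  rw [one_mul, abs_mul, abs_mul, abs_of_nonneg h3.le]
  calc |Real.sinh t| * (Real.exp (-z * Real.cosh t) * |Real.sinh (ν * t)|)
      ≤ Real.exp t * (Real.exp (-z * Real.cosh t) * Real.exp (|ν| * t)) := by
        apply mul_le_mul h2 (mul_le_mul_of_nonneg_left h1 h3.le) (by positivity) (by positivity)
    _ = Real.exp (-z*Real.cosh t + (1 + |ν|)*t) := by
        rw [← Real.exp_add, ← Real.exp_add]; ring_nf

lemma hasDerivAt_besselK (ν : ℝ) {z : ℝ} (hz : 0 < z) :
    HasDerivAt (fun x => besselK ν x)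
      (-(besselK (ν+1) z + besselK (ν-1) z)/2) z := by
  have hε : (0:ℝ) < z/2 := by linarith
  have key := hasDerivAt_integral_of_dominated_loc_of_deriv_le
    (μ := volume.restrict (Set.Ioi (0:ℝ))) (x₀ := z) (s := Metric.ball z (z/2))
    (F := fun x t => Real.exp (-x * Real.cosh t) * Real.cosh (ν * t))
    (F' := fun x t => -(Real.cosh t * (Real.exp (-x * Real.cosh t) * Real.cosh (ν * t))))
    (bound := fun t => Real.exp (-(z/2)*Real.cosh t + (1+|ν|)*t))
    (Metric.ball_mem_nhds z hε)
    (Eventually.of_forall (fun x => Continuous.aestronglyMeasurable (by fun_prop)))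
    (integrableOn_besselK_integrand ν hz)
    (Continuous.aestronglyMeasurable (by fun_prop))
    ?_ ?_ ?_
  · obtain ⟨-, hd⟩ := key
    have heq : (∫ t in Set.Ioi (0:ℝ),
        -(Real.cosh t * (Real.exp (-z * Real.cosh t) * Real.cosh (ν * t))))
        = -(besselK (ν+1) z + besselK (ν-1) z)/2 := by
      have hptw : ∀ t : ℝ,
          -(Real.cosh t * (Real.exp (-z * Real.cosh t) * Real.cosh (ν * t)))
          = (-(1/2 : ℝ)) * (Real.exp (-z * Real.cosh t) * Real.cosh ((ν+1) * t)
              + Real.exp (-z * Real.cosh t) * Real.cosh ((ν-1) * t)) := by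
        intro t
        have e1 : (ν+1)*t = ν*t + t := by ring
        have e2 : (ν-1)*t = ν*t - t := by ring
        rw [e1, e2, Real.cosh_add, Real.cosh_sub]
        ring
      simp_rw [hptw]
      rw [integral_const_mul, integral_add (integrableOn_besselK_integrand (ν+1) hz)
        (integrableOn_besselK_integrand (ν-1) hz)]
      show (-(1/2:ℝ)) * (besselK (ν+1) z + besselK (ν-1) z) = _
      ring
    rw [heq] at hd
    exact hd
  · rw [ae_restrict_iff' measurableSet_Ioi]
    refine ae_of_all _ (fun t ht x hx => ?_)
    have ht' : (0:ℝ) ≤ t := le_of_lt ht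
    have hxz : z/2 < x := by
      have := Metric.mem_ball.1 hx
      rw [Real.dist_eq, abs_lt] at this
      linarith [this.1]
    have h1 : Real.cosh (ν * t) ≤ Real.exp (|ν| * t) := by
      have := cosh_le_exp_abs (ν * t)
      rwa [abs_mul, abs_of_nonneg ht'] at this
    have h2 : Real.cosh t ≤ Real.exp t := by
      have := cosh_le_exp_abs t
      rwa [abs_of_nonneg ht'] at this
    have h3 : Real.exp (-x * Real.cosh t) ≤ Real.exp (-(z/2) * Real.cosh t) := by
      apply Real.exp_le_exp.2
      have hc : 0 < Real.cosh t := Real.cosh_pos (x:=t)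
      nlinarith
    rw [norm_neg, Real.norm_eq_abs, abs_of_nonneg (by positivity)]
    calc Real.cosh t * (Real.exp (-x * Real.cosh t) * Real.cosh (ν * t))
        ≤ Real.exp t * (Real.exp (-(z/2) * Real.cosh t) * Real.exp (|ν| * t)) := by
          apply mul_le_mul h2 (mul_le_mul h3 h1 (Real.cosh_pos (x:=ν*t)).le (Real.exp_pos _).le)
            (by positivity) (by positivity)
      _ = Real.exp (-(z/2)*Real.cosh t + (1+|ν|)*t) := by
          rw [← Real.exp_add, ← Real.exp_add]; ring_nf
  · exact master_integrable (z/2) (1+|ν|) hε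
  · refine ae_of_all _ (fun t x _ => ?_)
    have h1 : HasDerivAt (fun x : ℝ => -x * Real.cosh t) (-Real.cosh t) x := by
      simpa using ((hasDerivAt_id x).neg.mul_const (Real.cosh t))
    have h2 := (h1.exp).mul_const (Real.cosh (ν * t))
    refine h2.congr_deriv ?_
    ring

lemma besselK_recurrence (ν : ℝ) {z : ℝ} (hz : 0 < z) :
    besselK (ν+1) z - besselK (ν-1) z = (2*ν/z) * besselK ν z := by
  set F : ℝ → ℝ := fun t => Real.exp (-z * Real.cosh t) * Real.sinh (ν * t) with hF
  set F' : ℝ → ℝ := fun t =>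
    ν * (Real.exp (-z * Real.cosh t) * Real.cosh (ν * t))
      - z * (Real.sinh t * (Real.exp (-z * Real.cosh t) * Real.sinh (ν * t))) with hF'
  have hderiv : ∀ t : ℝ, HasDerivAt F (F' t) t := by
    intro t
    have h1 : HasDerivAt (fun t : ℝ => -z * Real.cosh t) (-z * Real.sinh t) t :=
      (Real.hasDerivAt_cosh t).const_mul (-z)
    have h2 := h1.exp
    have h3 : HasDerivAt (fun t : ℝ => Real.sinh (ν * t)) (Real.cosh (ν * t) * ν) t := by
      simpa using ((hasDerivAt_id t).const_mul ν).sinh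
    have h4 := h2.mul h3
    refine h4.congr_deriv ?_
    simp only [hF']
    ring
  have hint : IntegrableOn F' (Set.Ioi (0:ℝ)) :=
    (((integrableOn_besselK_integrand ν hz).const_mul ν).sub
      ((integrableOn_sinh_integrand ν hz).const_mul z))
  have htop : Tendsto F atTop (nhds 0) := by
    have hbd : ∀ᶠ t in atTop, ‖F t‖ ≤ Real.exp (-z * Real.cosh t + |ν| * t) := by
      filter_upwards [eventually_ge_atTop (0:ℝ)] with t ht
      have h1 : |Real.sinh (ν * t)| ≤ Real.exp (|ν| * t) := by
        have := abs_sinh_le_exp_abs (ν * t)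
        rwa [abs_mul, abs_of_nonneg ht] at this
      rw [Real.norm_eq_abs, abs_mul, abs_of_nonneg (Real.exp_pos _).le, Real.exp_add]
      exact mul_le_mul_of_nonneg_left h1 (Real.exp_pos _).le
    have hmul : Tendsto (fun t : ℝ => t * (|ν| - z/8 * t)) atTop atBot := by
      apply Tendsto.atTop_mul_atBot₀ tendsto_id
      have h5 : Tendsto (fun t : ℝ => z/8 * t - |ν|) atTop atTop :=
        tendsto_atTop_add_const_right _ _ (Tendsto.const_mul_atTop (by linarith) tendsto_id)
      have h6 := tendsto_neg_atTop_atBot.comp h5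
      have h7 : (fun t : ℝ => |ν| - z/8 * t) = (fun t : ℝ => -(z/8 * t - |ν|)) := by
        funext t; ring
      rw [h7]
      exact h6
    have hcomp : (fun t : ℝ => -z * Real.cosh t + |ν| * t) ≤ᶠ[atTop]
        (fun t : ℝ => t * (|ν| - z/8 * t)) := by
      filter_upwards [eventually_ge_atTop (0:ℝ)] with t ht
      have h7 := sq_div_le_cosh t ht
      nlinarith
    have hexp : Tendsto (fun t : ℝ => -z * Real.cosh t + |ν| * t) atTop atBot :=
      tendsto_atBot_mono' atTop hcomp hmul
    exact squeeze_zero_norm' hbd (Real.tendsto_exp_atBot.comp hexp)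
  have hibp := integral_Ioi_of_hasDerivAt_of_tendsto
    (f := F) (f' := F') (a := 0) (m := 0)
    (hderiv 0).continuousAt.continuousWithinAt
    (fun x _ => hderiv x) hint htop
  have hF0 : F 0 = 0 := by simp [hF]
  rw [hF0, sub_zero] at hibp
  have hsplit : ∫ t in Set.Ioi (0:ℝ), F' t
      = ν * besselK ν z
        - z * ∫ t in Set.Ioi (0:ℝ), Real.sinh t * (Real.exp (-z * Real.cosh t) * Real.sinh (ν * t)) := by
    rw [show F' = fun t => ν * (Real.exp (-z * Real.cosh t) * Real.cosh (ν * t))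
        - z * (Real.sinh t * (Real.exp (-z * Real.cosh t) * Real.sinh (ν * t))) from hF']
    rw [integral_sub ((integrableOn_besselK_integrand ν hz).const_mul ν)
      ((integrableOn_sinh_integrand ν hz).const_mul z), integral_const_mul, integral_const_mul]
    rfl
  rw [hibp] at hsplit
  have hzne : z ≠ 0 := ne_of_gt hz
  have hs : (∫ t in Set.Ioi (0:ℝ), Real.sinh t * (Real.exp (-z * Real.cosh t) * Real.sinh (ν * t)))
      = ν * besselK ν z / z := by
    rw [eq_div_iff hzne]
    linarith
  have hdiff : ∀ t : ℝ, Real.exp (-z * Real.cosh t) * Real.cosh ((ν+1) * t)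
      - Real.exp (-z * Real.cosh t) * Real.cosh ((ν-1) * t)
      = 2 * (Real.sinh t * (Real.exp (-z * Real.cosh t) * Real.sinh (ν * t))) := by
    intro t
    have e1 : (ν+1)*t = ν*t + t := by ring
    have e2 : (ν-1)*t = ν*t - t := by ring
    rw [e1, e2, Real.cosh_add, Real.cosh_sub]
    ring
  show (∫ t in Set.Ioi (0:ℝ), Real.exp (-z * Real.cosh t) * Real.cosh ((ν+1) * t))
      - (∫ t in Set.Ioi (0:ℝ), Real.exp (-z * Real.cosh t) * Real.cosh ((ν-1) * t)) = _
  rw [← integral_sub (integrableOn_besselK_integrand (ν+1) hz)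
    (integrableOn_besselK_integrand (ν-1) hz)]
  simp_rw [hdiff]
  rw [integral_const_mul, hs]
  ring

lemma hasDerivAt_rpow_mul_besselK (α ν : ℝ) {z : ℝ} (hz : 0 < z) :
    HasDerivAt (fun w : ℝ => w ^ α * besselK ν w)
      ((α - ν) * z^(α-1) * besselK ν z - z^α * besselK (ν-1) z) z := by
  have h1 : HasDerivAt (fun w : ℝ => w ^ α) (α * z^(α-1)) z :=
    Real.hasDerivAt_rpow_const (Or.inl (ne_of_gt hz))
  have h3 := h1.mul (hasDerivAt_besselK ν hz)
  have hzne : z ≠ 0 := ne_of_gt hz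
  have hrec' : (besselK (ν+1) z - besselK (ν-1) z) * z = 2*ν*besselK ν z := by
    rw [besselK_recurrence ν hz]; field_simp
  have hzα : z ^ α = z ^ (α-1) * z := by
    rw [← Real.rpow_add_one hzne (α-1)]; norm_num
  refine h3.congr_deriv ?_
  rw [hzα]
  linear_combination -(z^(α-1)/2) * hrec'

lemma coefA_of_le {n m : ℕ} (h : 2*m ≤ n) :
    coefA n m = (-1 : ℝ) ^ (n + m) * (1 / 2 ^ m) * (n.factorial : ℝ) /
      ((m.factorial : ℝ) * ((n - 2 * m).factorial : ℝ)) := by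
  unfold coefA
  by_cases hm : m = 0
  · subst hm
    simp
    rw [mul_div_assoc, div_self (by exact_mod_cast n.factorial_pos.ne' : ((n.factorial:ℝ)) ≠ 0), mul_one]
  · rw [if_neg hm, if_pos (by omega)]

lemma coefA_of_gt {n m : ℕ} (h : n < 2*m) : coefA n m = 0 := by
  unfold coefA
  have hm : m ≠ 0 := by omega
  rw [if_neg hm, if_neg (by omega)]

lemma coefA_succ_zero (n : ℕ) : coefA (n+1) 0 = -coefA n 0 := by
  simp [coefA, pow_succ]

lemma coefA_rec (n m : ℕ) :
    coefA (n+1) (m+1) = ((n:ℝ) - 2*m) * coefA n m - coefA n (m+1) := by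
  have hfac : ∀ j : ℕ, (0:ℝ) < j.factorial := fun j => by exact_mod_cast j.factorial_pos
  rcases lt_trichotomy n (2*m+1) with hn | hn | hn
  · -- n ≤ 2m
    rcases Nat.lt_or_ge n (2*m) with hn2 | hn2
    · rw [coefA_of_gt (show n+1 < 2*(m+1) by omega), coefA_of_gt (show n < 2*m by omega),
        coefA_of_gt (show n < 2*(m+1) by omega)]
      ring
    · -- n = 2m
      have hn3 : n = 2*m := by omega
      rw [coefA_of_gt (show n+1 < 2*(m+1) by omega), coefA_of_gt (show n < 2*(m+1) by omega)]
      rw [hn3]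
      push_cast
      ring
  · -- n = 2m+1
    subst hn
    rw [coefA_of_le (show 2*(m+1) ≤ 2*m+1+1 by omega), coefA_of_le (show 2*m ≤ 2*m+1 by omega),
      coefA_of_gt (show 2*m+1 < 2*(m+1) by omega)]
    have e1 : 2*m+1 - 2*m = 1 := by omega
    have e2 : 2*m+1+1 - 2*(m+1) = 0 := by omega
    rw [e1, e2]
    have hsign : (-1:ℝ)^(2*m+1+1+(m+1)) = (-1:ℝ)^(2*m+1+m) * 1 := by
      rw [show 2*m+1+1+(m+1) = (2*m+1+m)+2 by ring, pow_add]
      norm_num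
    rw [hsign]
    rw [show (2*m+1+1) = (2*m+1)+1 from rfl, Nat.factorial_succ, Nat.factorial_succ m]
    simp only [Nat.factorial_one, Nat.factorial_zero]
    push_cast
    have h2m : (0:ℝ) < 2^m := by positivity
    field_simp
    ring
  · -- 2m+2 ≤ n
    obtain ⟨k, hk⟩ : ∃ k, n = 2*m+2+k := ⟨n - (2*m+2), by omega⟩
    subst hk
    rw [coefA_of_le (show 2*(m+1) ≤ 2*m+2+k+1 by omega), coefA_of_le (show 2*m ≤ 2*m+2+k by omega),
      coefA_of_le (show 2*(m+1) ≤ 2*m+2+k by omega)]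
    have e1 : 2*m+2+k - 2*m = k+2 := by omega
    have e2 : 2*m+2+k+1 - 2*(m+1) = k+1 := by omega
    have e3 : 2*m+2+k - 2*(m+1) = k := by omega
    rw [e1, e2, e3]
    have hs1 : (-1:ℝ)^(2*m+2+k+1+(m+1)) = (-1:ℝ)^(2*m+2+k+m) * 1 := by
      rw [show 2*m+2+k+1+(m+1) = (2*m+2+k+m)+2 by ring, pow_add]
      norm_num
    have hs2 : (-1:ℝ)^(2*m+2+k+(m+1)) = (-1:ℝ)^(2*m+2+k+m) * (-1) := by
      rw [show 2*m+2+k+(m+1) = (2*m+2+k+m)+1 by ring, pow_succ]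
    rw [hs1, hs2]
    rw [show 2*m+2+k+1 = (2*m+2+k)+1 from rfl, Nat.factorial_succ,
      Nat.factorial_succ m, Nat.factorial_succ (k+1), Nat.factorial_succ k]
    push_cast
    have h2m : (0:ℝ) < 2^m := by positivity
    have hf1 := hfac (2*m+2+k)
    have hf2 := hfac m
    have hf3 := hfac k
    field_simp
    ring

/-- Representation of the `n`-th derivative of `z^s K_s(z)`. -/
theorem iteratedDeriv_rpow_mul_besselK
    (s : ℝ) (hs : s ∈ Set.Ioo (0:ℝ) 1) (n : ℕ) (z : ℝ) (hz : 0 < z) :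
    iteratedDerivWithin n (fun w : ℝ => w ^ s * besselK s w) (Set.Ioi (0:ℝ)) z
      = ∑ m ∈ Finset.range (n + 1),
          coefA n m * z ^ (s - (m : ℝ)) * besselK (s - ((n - m : ℕ) : ℝ)) z := by
  induction n generalizing z with
  | zero =>
    simp [coefA]
  | succ n ih =>
    rw [iteratedDerivWithin_succ,
        derivWithin_of_isOpen isOpen_Ioi hz]
    have heq : (iteratedDerivWithin n (fun w : ℝ => w ^ s * besselK s w) (Set.Ioi 0)) =ᶠ[nhds z]
        (fun w => ∑ m ∈ Finset.range (n + 1),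
          coefA n m * w ^ (s - (m : ℝ)) * besselK (s - ((n - m : ℕ) : ℝ)) w) := by
      filter_upwards [isOpen_Ioi.mem_nhds hz] with w hw
      exact ih w hw
    rw [heq.deriv_eq]
    have hder : HasDerivAt (fun w => ∑ m ∈ Finset.range (n + 1),
        coefA n m * w ^ (s - (m : ℝ)) * besselK (s - ((n - m : ℕ) : ℝ)) w)
        (∑ m ∈ Finset.range (n + 1), coefA n m *
          (((s - (m:ℝ)) - (s - ((n-m:ℕ):ℝ))) * z ^ (s - (m:ℝ) - 1)
              * besselK (s - ((n-m:ℕ):ℝ)) z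
            - z ^ (s - (m:ℝ)) * besselK (s - ((n-m:ℕ):ℝ) - 1) z)) z := by
      apply HasDerivAt.fun_sum
      intro m _
      have h := (hasDerivAt_rpow_mul_besselK (s - (m:ℝ)) (s - ((n-m:ℕ):ℝ)) hz).const_mul
        (coefA n m)
      have h2 : (fun w : ℝ => coefA n m * w ^ (s - (m:ℝ)) * besselK (s - ((n-m:ℕ):ℝ)) w)
          = fun w => coefA n m * (w ^ (s - (m:ℝ)) * besselK (s - ((n-m:ℕ):ℝ)) w) := by
        funext w; ring
      rw [h2]
      exact h
    rw [hder.deriv]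
    -- now the algebraic sum identity
    set A : ℕ → ℝ := fun m => ((n:ℝ) - 2*m) * coefA n m * z^(s-(m:ℝ)-1)
      * besselK (s-((n-m:ℕ):ℝ)) z with hA
    set B : ℕ → ℝ := fun m => coefA n m * z^(s-(m:ℝ)) * besselK (s-((n-m:ℕ):ℝ)-1) z with hB
    set C : ℕ → ℝ := fun m => coefA n (m+1) * z^(s-(m:ℝ)-1) * besselK (s-((n-m:ℕ):ℝ)) z with hC
    have hLHS : ∑ m ∈ Finset.range (n + 1), coefA n m *
          (((s - (m:ℝ)) - (s - ((n-m:ℕ):ℝ))) * z ^ (s - (m:ℝ) - 1)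
              * besselK (s - ((n-m:ℕ):ℝ)) z
            - z ^ (s - (m:ℝ)) * besselK (s - ((n-m:ℕ):ℝ) - 1) z)
        = ∑ m ∈ Finset.range (n + 1), (A m - B m) := by
      refine Finset.sum_congr rfl (fun m hm => ?_)
      have hmn : m ≤ n := by
        have := Finset.mem_range.1 hm; omega
      have hcast : ((n-m:ℕ):ℝ) = (n:ℝ) - (m:ℝ) := by
        push_cast [Nat.cast_sub hmn]; ring
      simp only [hA, hB, hcast]
      ring
    rw [hLHS]
    rw [Finset.sum_range_succ' (fun m => coefA (n+1) m * z ^ (s - (m:ℝ))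
      * besselK (s - ((n + 1 - m : ℕ) : ℝ)) z) (n+1)]
    have hT : ∀ m ∈ Finset.range (n+1), coefA (n+1) (m+1) * z ^ (s - ((m+1 : ℕ):ℝ))
        * besselK (s - ((n + 1 - (m+1) : ℕ) : ℝ)) z = A m - C m := by
      intro m hm
      have hmn : m ≤ n := by
        have := Finset.mem_range.1 hm; omega
      have e1 : (n + 1 - (m+1) : ℕ) = n - m := by omega
      have e2 : ((m+1 : ℕ):ℝ) = (m:ℝ) + 1 := by push_cast; ring
      rw [coefA_rec, e1, e2]
      simp only [hA, hC]
      rw [show s - ((m:ℝ)+1) = s - (m:ℝ) - 1 by ring]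
      ring
    rw [Finset.sum_congr rfl hT]
    have hBsum : ∑ m ∈ Finset.range (n+1), B m
        = ∑ m ∈ Finset.range n, B (m+1) + B 0 := Finset.sum_range_succ' B n
    have hCsum : ∑ m ∈ Finset.range (n+1), C m
        = ∑ m ∈ Finset.range n, C m + C n := Finset.sum_range_succ C n
    have hBC : ∑ m ∈ Finset.range n, B (m+1) = ∑ m ∈ Finset.range n, C m := by
      refine Finset.sum_congr rfl (fun m hm => ?_)
      have hmn : m < n := Finset.mem_range.1 hm
      have e1 : (n - (m+1) : ℕ) = n - m - 1 := by omega
      have e2 : ((n - m - 1 : ℕ):ℝ) = ((n-m:ℕ):ℝ) - 1 := by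
        have : 1 ≤ n - m := by omega
        push_cast [Nat.cast_sub this]
        ring
      simp only [hB, hC, e1, e2]
      rw [show s - (((n-m:ℕ):ℝ) - 1) - 1 = s - ((n-m:ℕ):ℝ) from by ring]
      push_cast
      ring
    have hCn : C n = 0 := by
      simp only [hC]
      rw [coefA_of_gt (show n < 2*(n+1) by omega)]
      ring
    have hT0 : coefA (n+1) 0 * z ^ (s - ((0:ℕ):ℝ)) * besselK (s - ((n+1-0:ℕ):ℝ)) z = -B 0 := by
      simp only [hB, Nat.sub_zero, Nat.cast_zero, coefA_succ_zero]
      push_cast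
      rw [show s - ((n:ℝ)+1) = s - (n:ℝ) - 1 by ring]
      ring
    rw [Finset.sum_sub_distrib, Finset.sum_sub_distrib, hT0]
    linarith [hBsum, hCsum, hBC, hCn]
end

section
/- Let α ∈ (−1,1), a > 0, and let f : [0,a] → ℝ be continuously differentiable. Then ∫₀^a y^{α} (f(y) − f(a))² dy ≤ (2/(α+1))² ∫₀^a y^{α+2} (f'(y))² dy. -/
open MeasureTheory Real Set Filter Topology

lemma cs_aux {μ : MeasureTheory.Measure ℝ} {F G : ℝ → ℝ}
    (hF : AEStronglyMeasurable F μ) (hG : AEStronglyMeasurable G μ)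
    (hF2 : Integrable (fun x => F x ^ 2) μ) (hG2 : Integrable (fun x => G x ^ 2) μ) :
    |∫ x, F x * G x ∂μ| ≤ Real.sqrt (∫ x, F x ^ 2 ∂μ) * Real.sqrt (∫ x, G x ^ 2 ∂μ) := by
  have hFm : MeasureTheory.MemLp F 2 μ := (memLp_two_iff_integrable_sq hF).mpr hF2
  have hGm : MeasureTheory.MemLp G 2 μ := (memLp_two_iff_integrable_sq hG).mpr hG2
  have h1 : |∫ x, F x * G x ∂μ| ≤ ∫ x, |F x| * |G x| ∂μ := by
    calc |∫ x, F x * G x ∂μ| = ‖∫ x, F x * G x ∂μ‖ := (Real.norm_eq_abs _).symm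
    _ ≤ ∫ x, ‖F x * G x‖ ∂μ := norm_integral_le_integral_norm _
    _ = ∫ x, |F x| * |G x| ∂μ := by simp [abs_mul]
  have hconj : Real.HolderConjugate 2 2 := Real.holderConjugate_iff.mpr ⟨one_lt_two, by norm_num⟩
  have h2 := MeasureTheory.integral_mul_le_Lp_mul_Lq_of_nonneg hconj
    (f := fun x => |F x|) (g := fun x => |G x|)
    (Filter.Eventually.of_forall fun x => abs_nonneg _)
    (Filter.Eventually.of_forall fun x => abs_nonneg _)
    (by simpa using hFm.norm) (by simpa using hGm.norm)
  have e1 : ∀ (H : ℝ → ℝ), (∫ x, |H x| ^ (2:ℝ) ∂μ) = ∫ x, H x ^ 2 ∂μ := by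
    intro H
    refine integral_congr_ae (Filter.Eventually.of_forall fun x => ?_)
    show |H x| ^ (2:ℝ) = H x ^ 2
    rw [show (2:ℝ) = ((2:ℕ):ℝ) by norm_num, Real.rpow_natCast, sq_abs]
  rw [e1, e1, ← Real.sqrt_eq_rpow, ← Real.sqrt_eq_rpow] at h2
  exact h1.trans h2

/-- Weighted Hardy-type inequality on `(0,a)`. -/
theorem weighted_hardy_inequality
    (α a : ℝ) (hα : α ∈ Set.Ioo (-1:ℝ) 1) (ha : 0 < a)
    (f f' : ℝ → ℝ)
    (hf : ∀ y ∈ Set.Icc (0:ℝ) a, HasDerivAt f (f' y) y)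
    (hf' : ContinuousOn f' (Set.Icc (0:ℝ) a)) :
    ∫ y in Set.Ioo (0:ℝ) a, y ^ α * (f y - f a) ^ 2 ≤
      (2 / (α + 1)) ^ 2 * ∫ y in Set.Ioo (0:ℝ) a, y ^ (α + 2) * f' y ^ 2 := by
  obtain ⟨hαl, hαu⟩ := hα
  have hα1 : (0:ℝ) < α + 1 := by linarith
  set c : ℝ := 2 / (α + 1) with hc
  have hcpos : 0 < c := by positivity
  set g : ℝ → ℝ := fun y => f y - f a with hgdef
  have hgderiv : ∀ y ∈ Set.Icc (0:ℝ) a, HasDerivAt g (f' y) y :=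
    fun y hy => (hf y hy).sub_const _
  have hgcont : ContinuousOn g (Set.Icc 0 a) :=
    fun y hy => (hgderiv y hy).continuousAt.continuousWithinAt
  have hga : g a = 0 := by simp [hgdef]
  -- the three integrands
  set P : ℝ → ℝ := fun y => y ^ α * g y ^ 2 with hPdef
  set Q : ℝ → ℝ := fun y => y ^ (α + 1) * (g y * f' y) with hQdef
  set R : ℝ → ℝ := fun y => y ^ (α + 2) * f' y ^ 2 with hRdef
  -- continuity facts
  have hrpow_cont : ∀ p : ℝ, 0 < p → ContinuousOn (fun y : ℝ => y ^ p) (Set.Icc 0 a) := by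
    intro p hp y hy
    exact (Real.continuousAt_rpow_const y p (Or.inr hp.le)).continuousWithinAt
  have hQcont : ContinuousOn Q (Set.Icc 0 a) :=
    (hrpow_cont (α+1) hα1).mul (hgcont.mul hf')
  have hRcont : ContinuousOn R (Set.Icc 0 a) :=
    (hrpow_cont (α+2) (by linarith)).mul (hf'.pow 2)
  have hPcont : ContinuousOn P (Set.Ioc 0 a) := by
    intro y hy
    exact ((Real.continuousAt_rpow_const y α (Or.inl (ne_of_gt hy.1))).continuousWithinAt.mul
      ((hgcont.mono Ioc_subset_Icc_self).pow 2 y hy))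
  -- bound for g
  obtain ⟨M, hM⟩ : ∃ M : ℝ, ∀ y ∈ Set.Icc (0:ℝ) a, |g y| ≤ M := by
    obtain ⟨M, hM⟩ := (isCompact_Icc.image_of_continuousOn hgcont).isBounded.subset_closedBall 0
    exact ⟨M, fun y hy => by
      simpa [Real.dist_eq] using (hM (Set.mem_image_of_mem g hy))⟩
  -- integrability of P on Ioc 0 a
  have hrpow_int : IntegrableOn (fun y : ℝ => y ^ α) (Set.Ioc 0 a) := by
    have := intervalIntegral.intervalIntegrable_rpow' (a := 0) (b := a) hαl
    rwa [intervalIntegrable_iff_integrableOn_Ioc_of_le ha.le] at this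
  have hPint : IntegrableOn P (Set.Ioc 0 a) := by
    refine Integrable.mono (hrpow_int.const_mul (M^2)) (hPcont.aestronglyMeasurable measurableSet_Ioc) ?_
    rw [ae_restrict_iff' measurableSet_Ioc]
    refine Filter.Eventually.of_forall fun y hy => ?_
    have h1 : (0:ℝ) ≤ y ^ α := Real.rpow_nonneg hy.1.le α
    have h2 : g y ^ 2 ≤ M ^ 2 := by
      have := hM y (Ioc_subset_Icc_self hy)
      nlinarith [abs_nonneg (g y), sq_abs (g y)]
    have h3 : (0:ℝ) ≤ M ^ 2 := le_trans (sq_nonneg _) h2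
    simp only [Real.norm_eq_abs, hPdef]
    rw [abs_of_nonneg (by positivity), abs_of_nonneg (by positivity)]
    nlinarith
  have hQint : IntegrableOn Q (Set.Ioc 0 a) :=
    (hQcont.integrableOn_Icc).mono_set Ioc_subset_Icc_self
  have hRint : IntegrableOn R (Set.Ioc 0 a) :=
    (hRcont.integrableOn_Icc).mono_set Ioc_subset_Icc_self
  set IP : ℝ := ∫ y in Set.Ioc (0:ℝ) a, P y with hIP
  set IQ : ℝ := ∫ y in Set.Ioc (0:ℝ) a, Q y with hIQ
  set IR : ℝ := ∫ y in Set.Ioc (0:ℝ) a, R y with hIR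
  -- FTC on [ε, a]
  have hFTC : ∀ ε ∈ Set.Ioc (0:ℝ) a,
      (∫ y in ε..a, P y) = - ((ε ^ (α+1) / (α+1)) * g ε ^ 2) - c * ∫ y in ε..a, Q y := by
    intro ε hε
    have hεa : ε ≤ a := hε.2
    have hsub : Set.uIcc ε a ⊆ Set.Icc 0 a := by
      rw [Set.uIcc_of_le hεa]
      exact Set.Icc_subset_Icc hε.1.le le_rfl
    have hderiv : ∀ y ∈ Set.uIcc ε a,
        HasDerivAt (fun y => (y ^ (α+1) / (α+1)) * g y ^ 2) (P y + c * Q y) y := by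
      intro y hy
      have hy' := hsub hy
      have hy0 : 0 < y := lt_of_lt_of_le hε.1 (by rw [Set.uIcc_of_le hεa] at hy; exact hy.1)
      have h1 : HasDerivAt (fun y : ℝ => y ^ (α+1) / (α+1)) (y ^ α) y := by
        have := (Real.hasDerivAt_rpow_const (x := y) (p := α+1) (Or.inl (ne_of_gt hy0))).div_const (α+1)
        have e : (α + 1) * y ^ (α + 1 - 1) / (α + 1) = y ^ α := by
          rw [show α + 1 - 1 = α by ring]
          field_simp
        rwa [e] at this
      have h2 : HasDerivAt (fun y => g y ^ 2) (2 * g y * f' y) y := by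
        have := (hgderiv y hy').fun_pow 2
        simpa [mul_comm, mul_assoc] using this
      have := h1.fun_mul h2
      refine this.congr_deriv ?_
      simp only [hPdef, hQdef, hc]
      field_simp
    have hcont2 : ContinuousOn (fun y => P y + c * Q y) (Set.uIcc ε a) := by
      refine ContinuousOn.add ?_ (continuousOn_const.mul (hQcont.mono hsub))
      intro y hy
      have hy0 : 0 < y := lt_of_lt_of_le hε.1 (by rw [Set.uIcc_of_le hεa] at hy; exact hy.1)
      exact (hPcont.mono (fun z hz => ⟨lt_of_lt_of_le hε.1 (by rw [Set.uIcc_of_le hεa] at hz; exact hz.1),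
        (hsub hz).2⟩) y hy)
    have hint : IntervalIntegrable (fun y => P y + c * Q y) volume ε a :=
      hcont2.intervalIntegrable
    have hFTC1 := intervalIntegral.integral_eq_sub_of_hasDerivAt hderiv hint
    have hPii : IntervalIntegrable P volume ε a := by
      rw [intervalIntegrable_iff_integrableOn_Ioc_of_le hεa]
      exact hPint.mono_set (Set.Ioc_subset_Ioc_left hε.1.le)
    have hQii : IntervalIntegrable Q volume ε a := by
      rw [intervalIntegrable_iff_integrableOn_Ioc_of_le hεa]
      exact hQint.mono_set (Set.Ioc_subset_Ioc_left hε.1.le)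
    rw [intervalIntegral.integral_add hPii (IntervalIntegrable.const_mul hQii c),
        intervalIntegral.integral_const_mul] at hFTC1
    rw [hga] at hFTC1
    have : (∫ y in ε..a, P y) + c * ∫ y in ε..a, Q y
        = - ((ε ^ (α+1) / (α+1)) * g ε ^ 2) := by
      rw [hFTC1]; ring_nf
    linarith [this]
  -- the limit filter
  set l : Filter ℝ := nhdsWithin 0 (Set.Ioc 0 a) with hl
  have hlne : l.NeBot := by
    refine mem_closure_iff_nhdsWithin_neBot.mp ?_
    rw [closure_Ioc ha.ne]
    exact ⟨le_rfl, ha.le⟩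
  -- limits of the primitives
  have hPlim : Tendsto (fun ε => ∫ y in ε..a, P y) l (𝓝 IP) := by
    have hP' : IntegrableOn P (Set.uIcc 0 a) := by
      rw [Set.uIcc_of_le ha.le, integrableOn_Icc_iff_integrableOn_Ioc]
      exact hPint
    have := (intervalIntegral.continuousOn_primitive_interval_left hP') 0 (by
      rw [Set.uIcc_of_le ha.le]; exact ⟨le_rfl, ha.le⟩)
    have h0 : (∫ y in (0:ℝ)..a, P y) = IP := intervalIntegral.integral_of_le ha.le
    have h2 : Tendsto (fun ε => ∫ y in ε..a, P y) (nhdsWithin 0 (Set.uIcc 0 a))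
        (𝓝 (∫ y in (0:ℝ)..a, P y)) := this
    rw [h0] at h2
    exact h2.mono_left (nhdsWithin_mono 0 (by rw [Set.uIcc_of_le ha.le]; exact Ioc_subset_Icc_self))
  have hQlim : Tendsto (fun ε => ∫ y in ε..a, Q y) l (𝓝 IQ) := by
    have hQ' : IntegrableOn Q (Set.uIcc 0 a) := by
      rw [Set.uIcc_of_le ha.le, integrableOn_Icc_iff_integrableOn_Ioc]
      exact hQint
    have := (intervalIntegral.continuousOn_primitive_interval_left hQ') 0 (by
      rw [Set.uIcc_of_le ha.le]; exact ⟨le_rfl, ha.le⟩)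
    have h0 : (∫ y in (0:ℝ)..a, Q y) = IQ := intervalIntegral.integral_of_le ha.le
    have h2 : Tendsto (fun ε => ∫ y in ε..a, Q y) (nhdsWithin 0 (Set.uIcc 0 a))
        (𝓝 (∫ y in (0:ℝ)..a, Q y)) := this
    rw [h0] at h2
    exact h2.mono_left (nhdsWithin_mono 0 (by rw [Set.uIcc_of_le ha.le]; exact Ioc_subset_Icc_self))
  -- boundary term tends to 0
  have hblim : Tendsto (fun ε : ℝ => (ε ^ (α+1) / (α+1)) * g ε ^ 2) l (𝓝 0) := by
    have h1 : Tendsto (fun ε : ℝ => ε ^ (α+1)) l (𝓝 0) := by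
      have := (Real.continuousAt_rpow_const 0 (α+1) (Or.inr hα1.le)).continuousWithinAt
        (s := Set.Ioc 0 a)
      rw [ContinuousWithinAt, Real.zero_rpow (ne_of_gt hα1)] at this
      exact this
    have h2 : Tendsto g l (𝓝 (g 0)) :=
      (hgcont 0 ⟨le_rfl, ha.le⟩).mono_left (nhdsWithin_mono 0 Ioc_subset_Icc_self)
    have := ((h1.div_const (α+1)).mul ((h2.pow 2)))
    simpa using this
  -- conclude IP = -c * IQ
  have hkey : IP = - c * IQ := by
    have h1 : Tendsto (fun ε => ∫ y in ε..a, P y) l (𝓝 (- 0 - c * IQ)) := by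
      have h2 : Tendsto (fun ε : ℝ =>
          - ((ε ^ (α+1) / (α+1)) * g ε ^ 2) - c * ∫ y in ε..a, Q y) l (𝓝 (- 0 - c * IQ)) :=
        (hblim.neg).sub (hQlim.const_mul c)
      refine h2.congr' ?_
      filter_upwards [self_mem_nhdsWithin] with ε hε
      exact (hFTC ε hε).symm
    have := tendsto_nhds_unique hPlim h1
    rw [this]; ring
  -- Cauchy-Schwarz
  set F : ℝ → ℝ := fun y => y ^ (α/2) * g y with hF
  set G : ℝ → ℝ := fun y => y ^ (α/2 + 1) * f' y with hG
  set μ : MeasureTheory.Measure ℝ := volume.restrict (Set.Ioc 0 a) with hμ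
  have hae : ∀ {φ ψ : ℝ → ℝ}, (∀ y ∈ Set.Ioc (0:ℝ) a, φ y = ψ y) → φ =ᵐ[μ] ψ := by
    intro φ ψ h
    rw [hμ, Filter.EventuallyEq, ae_restrict_iff' measurableSet_Ioc]
    exact Filter.Eventually.of_forall h
  have hF2eq : (fun y => F y ^ 2) =ᵐ[μ] P := by
    refine hae fun y hy => ?_
    have e : (y ^ (α/2)) ^ 2 = y ^ α := by
      rw [← Real.rpow_natCast (y ^ (α/2)) 2, ← Real.rpow_mul hy.1.le]
      congr 1; push_cast; ring
    show (y ^ (α/2) * g y) ^ 2 = y ^ α * g y ^ 2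
    rw [mul_pow, e]
  have hG2eq : (fun y => G y ^ 2) =ᵐ[μ] R := by
    refine hae fun y hy => ?_
    have e : (y ^ (α/2+1)) ^ 2 = y ^ (α+2) := by
      rw [← Real.rpow_natCast (y ^ (α/2+1)) 2, ← Real.rpow_mul hy.1.le]
      congr 1; push_cast; ring
    show (y ^ (α/2+1) * f' y) ^ 2 = y ^ (α+2) * f' y ^ 2
    rw [mul_pow, e]
  have hFGeq : (fun y => F y * G y) =ᵐ[μ] Q := by
    refine hae fun y hy => ?_
    show y ^ (α/2) * g y * (y ^ (α/2+1) * f' y) = y ^ (α+1) * (g y * f' y)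
    have e : y ^ (α/2) * y ^ (α/2 + 1) = y ^ (α + 1) := by
      rw [← Real.rpow_add hy.1]; congr 1; ring
    calc y ^ (α/2) * g y * (y ^ (α/2+1) * f' y)
        = (y ^ (α/2) * y ^ (α/2+1)) * (g y * f' y) := by ring
    _ = y ^ (α+1) * (g y * f' y) := by rw [e]
  have hFmeas : AEStronglyMeasurable F μ := by
    refine ContinuousOn.aestronglyMeasurable ?_ measurableSet_Ioc
    intro y hy
    exact (Real.continuousAt_rpow_const y (α/2) (Or.inl (ne_of_gt hy.1))).continuousWithinAt.mul
      ((hgcont.mono Ioc_subset_Icc_self) y hy)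
  have hGmeas : AEStronglyMeasurable G μ := by
    refine ContinuousOn.aestronglyMeasurable ?_ measurableSet_Ioc
    intro y hy
    exact (Real.continuousAt_rpow_const y (α/2+1) (Or.inl (ne_of_gt hy.1))).continuousWithinAt.mul
      ((hf'.mono Ioc_subset_Icc_self) y hy)
  have hF2int : Integrable (fun y => F y ^ 2) μ := hPint.congr hF2eq.symm
  have hG2int : Integrable (fun y => G y ^ 2) μ := hRint.congr hG2eq.symm
  have hCS := cs_aux hFmeas hGmeas hF2int hG2int
  rw [integral_congr_ae hF2eq, integral_congr_ae hG2eq, integral_congr_ae hFGeq] at hCS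
  -- nonnegativity
  have hIPnn : 0 ≤ IP := by
    refine setIntegral_nonneg measurableSet_Ioc fun y hy => ?_
    exact mul_nonneg (Real.rpow_nonneg hy.1.le _) (sq_nonneg _)
  have hIRnn : 0 ≤ IR := by
    refine setIntegral_nonneg measurableSet_Ioc fun y hy => ?_
    exact mul_nonneg (Real.rpow_nonneg hy.1.le _) (sq_nonneg _)
  -- put it together
  have hmain : IP ≤ c ^ 2 * IR := by
    have h1 : IP ≤ c * (Real.sqrt IP * Real.sqrt IR) := by
      calc IP = - c * IQ := hkey
      _ ≤ c * |IQ| := by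
        rcases abs_cases IQ with ⟨h, _⟩ | ⟨h, _⟩ <;> nlinarith
      _ ≤ c * (Real.sqrt IP * Real.sqrt IR) := by
        exact mul_le_mul_of_nonneg_left hCS hcpos.le
    nlinarith [Real.sq_sqrt hIPnn, Real.sq_sqrt hIRnn, Real.sqrt_nonneg IP,
      Real.sqrt_nonneg IR, sq_nonneg (Real.sqrt IP - c * Real.sqrt IR)]
  -- convert Ioc to Ioo
  calc ∫ y in Set.Ioo (0:ℝ) a, y ^ α * (f y - f a) ^ 2
      = IP := (MeasureTheory.integral_Ioc_eq_integral_Ioo).symm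
  _ ≤ c ^ 2 * IR := hmain
  _ = (2/(α+1)) ^ 2 * ∫ y in Set.Ioo (0:ℝ) a, y ^ (α+2) * f' y ^ 2 := by
      rw [hc, hIR, MeasureTheory.integral_Ioc_eq_integral_Ioo]
end
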